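/- Let θ ∈ (0,1) and α ∈ (1,2]. Then for all U, V ∈ ℝ^{m×n}, ‖(1−θ)(U + V)‖_F^α ≤ (1−θ)‖U‖_F^α + 3θ^{1−α}‖V‖_F^α. -/

import Mathlib

open Matrix Kronecker

/-- Spectral norm: ℓ²→ℓ² operator norm of a real matrix. -/
noncomputable def specNorm {ι κ : Type*} [Fintype ι] [Fintype κ] [DecidableEq κ]
    (A : Matrix ι κ ℝ) : ℝ :=
  ‖LinearMap.toContinuousLinearMap (Matrix.toEuclideanLin A)‖

/-- The positive semidefinite square root of a positive semidefinite matrix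
(the definition of `Matrix.PosSemidef.sqrt` in the older Mathlib). -/
noncomputable def Matrix.PosSemidef.sqrt {n 𝕜 : Type*} [Fintype n] [DecidableEq n] [RCLike 𝕜]
    [PartialOrder 𝕜] [StarOrderedRing 𝕜] {A : Matrix n n 𝕜} (hA : A.PosSemidef) : Matrix n n 𝕜 :=
  hA.1.eigenvectorUnitary.1 * diagonal ((↑) ∘ (Real.sqrt ∘ hA.1.eigenvalues)) *
  (star hA.1.eigenvectorUnitary : Matrix n n 𝕜)

/-- Nuclear norm: trace of the positive semidefinite square root of `Aᵀ * A`. -/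
noncomputable def nucNorm {ι κ : Type*} [Fintype ι] [Fintype κ] [DecidableEq κ]
    (A : Matrix ι κ ℝ) : ℝ :=
  Matrix.trace (Matrix.posSemidef_conjTranspose_mul_self A).sqrt

/-- Frobenius norm. -/
noncomputable def frobNorm {ι κ : Type*} [Fintype ι] [Fintype κ] (A : Matrix ι κ ℝ) : ℝ :=
  Real.sqrt (∑ i, ∑ j, (A i j) ^ 2)

/-- Trace inner product `⟨A, B⟩ = trace (Aᵀ B)`. -/
noncomputable def tin {ι κ : Type*} [Fintype ι] [Fintype κ] (A B : Matrix ι κ ℝ) : ℝ :=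
  Matrix.trace (Aᵀ * B)

/-- Vertical stacking of `N` matrices of size `m × n`. -/
def vstack {N m n : ℕ} (Y : Fin N → Matrix (Fin m) (Fin n) ℝ) :
    Matrix (Fin N × Fin m) (Fin n) ℝ :=
  fun p j => Y p.1 p.2 j

lemma frobNorm_eq_norm {m n : ℕ} (A : Matrix (Fin m) (Fin n) ℝ) :
    frobNorm A = ‖(WithLp.toLp 2 fun p : Fin m × Fin n => A p.1 p.2)‖ := by
  rw [EuclideanSpace.norm_eq, frobNorm, Fintype.sum_prod_type]
  simp [Real.norm_eq_abs, sq_abs]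

lemma frobNorm_nonneg {m n : ℕ} (A : Matrix (Fin m) (Fin n) ℝ) : 0 ≤ frobNorm A :=
  Real.sqrt_nonneg _

lemma frobNorm_add_le {m n : ℕ} (A B : Matrix (Fin m) (Fin n) ℝ) :
    frobNorm (A + B) ≤ frobNorm A + frobNorm B := by
  rw [frobNorm_eq_norm, frobNorm_eq_norm, frobNorm_eq_norm]
  exact norm_add_le (WithLp.toLp 2 fun p : Fin m × Fin n => A p.1 p.2)
    (WithLp.toLp 2 fun p : Fin m × Fin n => B p.1 p.2)

lemma frobNorm_smul {m n : ℕ} (c : ℝ) (A : Matrix (Fin m) (Fin n) ℝ) :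
    frobNorm (c • A) = |c| * frobNorm A := by
  rw [frobNorm_eq_norm, frobNorm_eq_norm]
  have : (WithLp.toLp 2 fun p : Fin m × Fin n => (c • A) p.1 p.2)
      = c • (WithLp.toLp 2 fun p : Fin m × Fin n => A p.1 p.2) := by
    ext p; simp [Matrix.smul_apply]
  rw [this, norm_smul, Real.norm_eq_abs]

lemma key_scalar (θ α a b : ℝ) (hθ0 : 0 < θ) (hθ1 : θ < 1) (hα1 : 1 < α)
    (ha : 0 ≤ a) (hb : 0 ≤ b) :
    (a + b) ^ α ≤ (1 - θ) ^ (1 - α) * a ^ α + θ ^ (1 - α) * b ^ α := by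
  have h1θ : (0:ℝ) < 1 - θ := by linarith
  have hc := (convexOn_rpow hα1.le).2
    (Set.mem_Ici.2 (div_nonneg ha h1θ.le)) (Set.mem_Ici.2 (div_nonneg hb hθ0.le))
    h1θ.le hθ0.le (by ring)
  have hx : (1 - θ) • (a / (1 - θ)) + θ • (b / θ) = a + b := by
    simp only [smul_eq_mul]; field_simp
  rw [hx] at hc
  have hda : (a / (1 - θ)) ^ α = a ^ α / (1 - θ) ^ α := Real.div_rpow ha h1θ.le α
  have hdb : (b / θ) ^ α = b ^ α / θ ^ α := Real.div_rpow hb hθ0.le α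
  have e1 : (1 - θ) ^ (1 - α) = (1 - θ) / (1 - θ) ^ α := by
    rw [Real.rpow_sub h1θ, Real.rpow_one]
  have e2 : θ ^ (1 - α) = θ / θ ^ α := by
    rw [Real.rpow_sub hθ0, Real.rpow_one]
  calc (a + b) ^ α ≤ (1 - θ) * (a / (1 - θ)) ^ α + θ * (b / θ) ^ α := hc
    _ = (1 - θ) ^ (1 - α) * a ^ α + θ ^ (1 - α) * b ^ α := by
        rw [hda, hdb, e1, e2]; ring

theorem stmt17 {m n : ℕ} (θ α : ℝ) (hθ0 : 0 < θ) (hθ1 : θ < 1) (hα1 : 1 < α) (hα2 : α ≤ 2) :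
    ∀ U V : Matrix (Fin m) (Fin n) ℝ,
      frobNorm ((1 - θ) • (U + V)) ^ α
        ≤ (1 - θ) * frobNorm U ^ α + 3 * θ ^ (1 - α) * frobNorm V ^ α := by
  intro U V
  have h1θ : (0:ℝ) < 1 - θ := by linarith
  set a := frobNorm U with ha'
  set b := frobNorm V with hb'
  have ha : 0 ≤ a := frobNorm_nonneg U
  have hb : 0 ≤ b := frobNorm_nonneg V
  have hsmul : frobNorm ((1 - θ) • (U + V)) = (1 - θ) * frobNorm (U + V) := by
    rw [frobNorm_smul, abs_of_pos h1θ]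
  have htri : frobNorm (U + V) ≤ a + b := frobNorm_add_le U V
  have h0 : frobNorm ((1 - θ) • (U + V)) ^ α ≤ ((1 - θ) * (a + b)) ^ α := by
    apply Real.rpow_le_rpow (frobNorm_nonneg _) _ (by linarith)
    rw [hsmul]
    exact mul_le_mul_of_nonneg_left htri h1θ.le
  have h1 : ((1 - θ) * (a + b)) ^ α = (1 - θ) ^ α * (a + b) ^ α :=
    Real.mul_rpow h1θ.le (by linarith)
  have h2 := key_scalar θ α a b hθ0 hθ1 hα1 ha hb
  have hpowle : (1 - θ) ^ α ≤ 1 := by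
    apply Real.rpow_le_one h1θ.le (by linarith) (by linarith)
  have hpownn : (0:ℝ) ≤ (1 - θ) ^ α := Real.rpow_nonneg h1θ.le α
  have h3 : (1 - θ) ^ α * (1 - θ) ^ (1 - α) = 1 - θ := by
    rw [← Real.rpow_add h1θ]; norm_num
  have hθpow : (0:ℝ) ≤ θ ^ (1 - α) := Real.rpow_nonneg hθ0.le _
  calc frobNorm ((1 - θ) • (U + V)) ^ α
      ≤ (1 - θ) ^ α * (a + b) ^ α := by rw [← h1]; exact h0
    _ ≤ (1 - θ) ^ α * ((1 - θ) ^ (1 - α) * a ^ α + θ ^ (1 - α) * b ^ α) :=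
        mul_le_mul_of_nonneg_left h2 hpownn
    _ = (1 - θ) * a ^ α + (1 - θ) ^ α * θ ^ (1 - α) * b ^ α := by
        rw [mul_add, ← mul_assoc, h3]; ring
    _ ≤ (1 - θ) * a ^ α + 3 * θ ^ (1 - α) * b ^ α := by
        have : (1 - θ) ^ α * θ ^ (1 - α) ≤ 3 * θ ^ (1 - α) := by
          apply mul_le_mul_of_nonneg_right (by linarith) hθpow
        have hbpow : (0:ℝ) ≤ b ^ α := Real.rpow_nonneg hb _
        nlinarith
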